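/- Structure-equation identity: Let m₁ ∈ {−2, 1}, let U ⊆ ℝ² be open and let u : U → ℝ have continuous derivatives u_x, u_t, u_{xx}, u_{xt}, u_{xxx}, u_{xxt}. Define f₁₁ = u − u_{xx} and f₁₂ = 2u(u − u_{xx}) + (4/m₁) u u_x − 2u_x² − 2u². Then the pointwise identity ∂ₜ f₁₁ − ∂ₓ f₁₂ − m₁ f₁₂ = u_t − u_{txx} − 4uu_x − 2u_x² − 2uu_{xx} + 6u_xu_{xx} + 2uu_{xxx} holds on U. In particular, u solves the equation u_t − u_{txx} = 4uu_x + 2u_x² + 2uu_{xx} − 6u_xu_{xx} − 2uu_{xxx} on U if and only if ∂ₜ f₁₁ = ∂ₓ f₁₂ + m₁ f₁₂ on U. -/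

import Mathlib

noncomputable section

/-- Partial derivative in the first (spatial) variable. -/
def pdx (f : ℝ → ℝ → ℝ) : ℝ → ℝ → ℝ := fun x t => deriv (fun y => f y t) x

/-- Partial derivative in the second (time) variable. -/
def pdt (f : ℝ → ℝ → ℝ) : ℝ → ℝ → ℝ := fun x t => deriv (fun τ => f x τ) t

/-- Coefficient `f₁₁ = u - u_{xx}` of the one-form `ω₁`. -/
def F11 (u : ℝ → ℝ → ℝ) : ℝ → ℝ → ℝ := fun x t => u x t - pdx (pdx u) x t

/-- Coefficient `f₁₂ = 2u(u - u_{xx}) + (4/m₁)uu_x - 2u_x² - 2u²` of the one-form `ω₁`. -/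
def F12 (m₁ : ℝ) (u : ℝ → ℝ → ℝ) : ℝ → ℝ → ℝ := fun x t =>
  2 * u x t * (u x t - pdx (pdx u) x t) + (4 / m₁) * u x t * pdx u x t
    - 2 * (pdx u x t) ^ 2 - 2 * (u x t) ^ 2

end

/-- **Structure-equation identity.**
Let `m₁ ∈ {-2,1}`, `U ⊆ ℝ²` open, `u : U → ℝ` with continuous derivatives
`u_x, u_t, u_xx, u_xt, u_xxx, u_xxt`. With `f₁₁ = u - u_{xx}` and
`f₁₂ = 2u(u-u_{xx}) + (4/m₁)uu_x - 2u_x² - 2u²` one has, pointwise on `U`,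
`∂ₜf₁₁ - ∂ₓf₁₂ - m₁f₁₂ = u_t - u_{txx} - 4uu_x - 2u_x² - 2uu_{xx} + 6u_xu_{xx} + 2uu_{xxx}`.
In particular `u` solves the Novikov-type equation on `U` iff `∂ₜf₁₁ = ∂ₓf₁₂ + m₁f₁₂` on `U`. -/
theorem structure_equation_identity
    (m₁ : ℝ) (hm₁ : m₁ = -2 ∨ m₁ = 1)
    (U : Set (ℝ × ℝ)) (hU : IsOpen U) (u : ℝ → ℝ → ℝ)
    -- existence of the partial derivatives on U
    (hdx : ∀ p ∈ U, DifferentiableAt ℝ (fun y => u y p.2) p.1)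
    (hdxx : ∀ p ∈ U, DifferentiableAt ℝ (fun y => pdx u y p.2) p.1)
    (hdxxx : ∀ p ∈ U, DifferentiableAt ℝ (fun y => pdx (pdx u) y p.2) p.1)
    (hdt : ∀ p ∈ U, DifferentiableAt ℝ (fun τ => u p.1 τ) p.2)
    (hdxxt : ∀ p ∈ U, DifferentiableAt ℝ (fun τ => pdx (pdx u) p.1 τ) p.2)
    -- continuity of u_x, u_t, u_xx, u_xt, u_xxx, u_xxt on U
    (hc1 : ContinuousOn (fun p : ℝ × ℝ => pdx u p.1 p.2) U)
    (hc2 : ContinuousOn (fun p : ℝ × ℝ => pdt u p.1 p.2) U)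
    (hc3 : ContinuousOn (fun p : ℝ × ℝ => pdx (pdx u) p.1 p.2) U)
    (hc4 : ContinuousOn (fun p : ℝ × ℝ => pdt (pdx u) p.1 p.2) U)
    (hc5 : ContinuousOn (fun p : ℝ × ℝ => pdx (pdx (pdx u)) p.1 p.2) U)
    (hc6 : ContinuousOn (fun p : ℝ × ℝ => pdt (pdx (pdx u)) p.1 p.2) U) :
    (∀ p ∈ U,
      pdt (F11 u) p.1 p.2 - pdx (F12 m₁ u) p.1 p.2 - m₁ * F12 m₁ u p.1 p.2 =
        pdt u p.1 p.2 - pdt (pdx (pdx u)) p.1 p.2 - 4 * u p.1 p.2 * pdx u p.1 p.2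
          - 2 * (pdx u p.1 p.2) ^ 2 - 2 * u p.1 p.2 * pdx (pdx u) p.1 p.2
          + 6 * pdx u p.1 p.2 * pdx (pdx u) p.1 p.2
          + 2 * u p.1 p.2 * pdx (pdx (pdx u)) p.1 p.2) ∧
    ((∀ p ∈ U,
        pdt u p.1 p.2 - pdt (pdx (pdx u)) p.1 p.2 =
          4 * u p.1 p.2 * pdx u p.1 p.2 + 2 * (pdx u p.1 p.2) ^ 2
            + 2 * u p.1 p.2 * pdx (pdx u) p.1 p.2
            - 6 * pdx u p.1 p.2 * pdx (pdx u) p.1 p.2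
            - 2 * u p.1 p.2 * pdx (pdx (pdx u)) p.1 p.2) ↔
      (∀ p ∈ U,
        pdt (F11 u) p.1 p.2 = pdx (F12 m₁ u) p.1 p.2 + m₁ * F12 m₁ u p.1 p.2)) := by

  have main : ∀ p ∈ U,
      pdt (F11 u) p.1 p.2 - pdx (F12 m₁ u) p.1 p.2 - m₁ * F12 m₁ u p.1 p.2 =
        pdt u p.1 p.2 - pdt (pdx (pdx u)) p.1 p.2 - 4 * u p.1 p.2 * pdx u p.1 p.2
          - 2 * (pdx u p.1 p.2) ^ 2 - 2 * u p.1 p.2 * pdx (pdx u) p.1 p.2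
          + 6 * pdx u p.1 p.2 * pdx (pdx u) p.1 p.2
          + 2 * u p.1 p.2 * pdx (pdx (pdx u)) p.1 p.2 := by
    intro p hp
    obtain ⟨x, t⟩ := p
    simp only at *
    have hA : HasDerivAt (fun y => u y t) (pdx u x t) x := (hdx (x, t) hp).hasDerivAt
    have hB : HasDerivAt (fun y => pdx u y t) (pdx (pdx u) x t) x :=
      (hdxx (x, t) hp).hasDerivAt
    have hC : HasDerivAt (fun y => pdx (pdx u) y t) (pdx (pdx (pdx u)) x t) x :=
      (hdxxx (x, t) hp).hasDerivAt
    have hT : HasDerivAt (fun τ => u x τ) (pdt u x t) t := (hdt (x, t) hp).hasDerivAt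
    have hT2 : HasDerivAt (fun τ => pdx (pdx u) x τ) (pdt (pdx (pdx u)) x t) t :=
      (hdxxt (x, t) hp).hasDerivAt
    have h11 : pdt (F11 u) x t = pdt u x t - pdt (pdx (pdx u)) x t := by
      have : HasDerivAt (fun τ => F11 u x τ) (pdt u x t - pdt (pdx (pdx u)) x t) t :=
        hT.sub hT2
      exact this.deriv
    have h12 : pdx (F12 m₁ u) x t =
        2 * pdx u x t * (u x t - pdx (pdx u) x t)
          + 2 * u x t * (pdx u x t - pdx (pdx (pdx u)) x t)
          + ((4 / m₁) * pdx u x t * pdx u x t + (4 / m₁) * u x t * pdx (pdx u) x t)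
          - 2 * (2 * pdx u x t * pdx (pdx u) x t) - 2 * (2 * u x t * pdx u x t) := by
      have h1 : HasDerivAt (fun y => 2 * u y t * (u y t - pdx (pdx u) y t))
          (2 * pdx u x t * (u x t - pdx (pdx u) x t)
            + 2 * u x t * (pdx u x t - pdx (pdx (pdx u)) x t)) x := by
        have := ((hA.const_mul 2).mul (hA.sub hC))
        exact this.congr_deriv (by simp only [Pi.sub_apply])
      have h2 : HasDerivAt (fun y => (4 / m₁) * u y t * pdx u y t)
          ((4 / m₁) * pdx u x t * pdx u x t + (4 / m₁) * u x t * pdx (pdx u) x t) x := by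
        have := ((hA.const_mul (4 / m₁)).mul hB)
        exact this.congr_deriv (by ring)
      have h3 : HasDerivAt (fun y => 2 * (pdx u y t) ^ 2)
          (2 * (2 * pdx u x t * pdx (pdx u) x t)) x := by
        have := (hB.pow 2).const_mul 2
        exact this.congr_deriv (by ring)
      have h4 : HasDerivAt (fun y => 2 * (u y t) ^ 2)
          (2 * (2 * u x t * pdx u x t)) x := by
        have := (hA.pow 2).const_mul 2
        exact this.congr_deriv (by ring)
      exact (((h1.add h2).sub h3).sub h4).deriv
    rw [h11, h12]
    simp only [F12]
    rcases hm₁ with h | h <;> subst h <;> ring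
  refine ⟨main, ?_⟩
  constructor
  · intro h p hp
    have := main p hp
    have h2 := h p hp
    linarith
  · intro h p hp
    have := main p hp
    have h2 := h p hp
    linarith
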